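/- Let f : ℝ → ℝ ∪ {∞} be closed, convex, and proper, let a ∈ ℝ^d with a ≠ 0, and define g(x) = f(aᵀx). Then prox_g(x₀) = x₀ + β·a, where β = argmin_β { f(aᵀx₀ + β‖a‖₂²) + (‖a‖₂²/2)β² }. -/

import Mathlib

open Set Filter Topology
open scoped RealInnerProductSpace

noncomputable section

/-- `f` is closed (lower semicontinuous), convex, and proper
as an extended-real-valued function. -/
def ClosedConvexProper {E : Type*} [NormedAddCommGroup E] [NormedSpace ℝ E]
    (f : E → EReal) : Prop :=
  LowerSemicontinuous f ∧
  (∀ (a b : ℝ) (x y : E), 0 ≤ a → 0 ≤ b → a + b = 1 →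
    f (a • x + b • y) ≤ (a : EReal) * f x + (b : EReal) * f y) ∧
  (∀ x, f x ≠ ⊥) ∧ (∃ x, f x ≠ ⊤)

/-- `p` is a minimizer of the prox objective of the extended-real-valued `f` at `x₀`. -/
def IsProxPt {E : Type*} [NormedAddCommGroup E] [InnerProductSpace ℝ E]
    (f : E → EReal) (x₀ p : E) : Prop :=
  IsMinOn (fun x => f x + ((1 / 2 * ‖x - x₀‖ ^ 2 : ℝ) : EReal)) Set.univ p

/-- `p` is a minimizer of the prox objective of the real-valued `f` at `x₀`. -/
def IsProxPtR {E : Type*} [NormedAddCommGroup E] [InnerProductSpace ℝ E]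
    (f : E → ℝ) (x₀ p : E) : Prop :=
  IsMinOn (fun x => f x + 1 / 2 * ‖x - x₀‖ ^ 2) Set.univ p

/-- Prox of `g(x) = f(aᵀx)` reduces to a one-dimensional prox problem. -/
theorem stmt3 {d : ℕ} (f : ℝ → EReal) (hf : ClosedConvexProper f)
    (a : EuclideanSpace ℝ (Fin d)) (ha : a ≠ 0)
    (x₀ : EuclideanSpace ℝ (Fin d)) (β : ℝ)
    (hβ : IsMinOn
      (fun t : ℝ => f (⟪a, x₀⟫ + t * ‖a‖ ^ 2) + ((‖a‖ ^ 2 / 2 * t ^ 2 : ℝ) : EReal))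
      Set.univ β) :
    IsProxPt (fun x => f ⟪a, x⟫) x₀ (x₀ + β • a) := by
  have hna : (0:ℝ) < ‖a‖ := norm_pos_iff.mpr ha
  have hna2 : (0:ℝ) < ‖a‖ ^ 2 := by positivity
  intro x _
  simp only [Set.mem_univ, Set.mem_setOf_eq]
  set t : ℝ := ⟪a, x - x₀⟫ / ‖a‖ ^ 2 with ht
  have hinner : ⟪a, x⟫ = ⟪a, x₀⟫ + t * ‖a‖ ^ 2 := by
    rw [ht, div_mul_cancel₀ _ hna2.ne', inner_sub_right]; ring
  have hp : ⟪a, (x₀ + β • a : EuclideanSpace ℝ (Fin d))⟫ = ⟪a, x₀⟫ + β * ‖a‖ ^ 2 := by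
    rw [inner_add_right, real_inner_smul_right, real_inner_self_eq_norm_sq]
  have hnormp : ‖(x₀ + β • a : EuclideanSpace ℝ (Fin d)) - x₀‖ ^ 2 = β ^ 2 * ‖a‖ ^ 2 := by
    rw [add_sub_cancel_left, norm_smul, mul_pow, Real.norm_eq_abs, sq_abs]
  have hCS : t ^ 2 * ‖a‖ ^ 2 ≤ ‖x - x₀‖ ^ 2 := by
    have h := abs_real_inner_le_norm a (x - x₀)
    have h2 : ⟪a, x - x₀⟫ ^ 2 ≤ ‖a‖ ^ 2 * ‖x - x₀‖ ^ 2 := by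
      rw [← mul_pow]
      calc ⟪a, x - x₀⟫ ^ 2 = |⟪a, x - x₀⟫| ^ 2 := (sq_abs _).symm
        _ ≤ (‖a‖ * ‖x - x₀‖) ^ 2 := by
            apply pow_le_pow_left₀ (abs_nonneg _) h
    rw [ht, div_pow, div_mul_eq_mul_div, div_le_iff₀ (by positivity)]
    nlinarith [h2, hna2]
  have hmin := hβ (Set.mem_univ t)
  simp only [Set.mem_setOf_eq] at hmin
  calc f ⟪a, (x₀ + β • a : EuclideanSpace ℝ (Fin d))⟫
        + ((1 / 2 * ‖(x₀ + β • a : EuclideanSpace ℝ (Fin d)) - x₀‖ ^ 2 : ℝ) : EReal)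
      = f (⟪a, x₀⟫ + β * ‖a‖ ^ 2) + ((‖a‖ ^ 2 / 2 * β ^ 2 : ℝ) : EReal) := by
        rw [hp, hnormp]; congr 1; norm_cast; ring
    _ ≤ f (⟪a, x₀⟫ + t * ‖a‖ ^ 2) + ((‖a‖ ^ 2 / 2 * t ^ 2 : ℝ) : EReal) := hmin
    _ = f ⟪a, x⟫ + ((‖a‖ ^ 2 / 2 * t ^ 2 : ℝ) : EReal) := by rw [hinner]
    _ ≤ f ⟪a, x⟫ + ((1 / 2 * ‖x - x₀‖ ^ 2 : ℝ) : EReal) := by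
        apply add_le_add_right
        exact EReal.coe_le_coe_iff.mpr (by nlinarith [hCS])
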